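/- arXiv:1112.0293 — 5 statements merged into one kernel-verified Lean document; each statement's English description precedes it below -/
import Mathlib

section
/- Let H be a real Hilbert space and let p : H → [0, +∞] be convex, lower semicontinuous, positively 1-homogeneous, with p(0) = 0, and let N_p := {ζ ∈ H : ⟨ζ, x⟩ ≤ p(x) for all x ∈ H}. Fix A ∈ H. Then the functional ξ ↦ (1/2)‖ξ‖² + p(A − ξ) has a unique minimizer over H, and this minimizer equals the metric projection ξ₀ of A onto the nonempty closed convex set N_p (i.e., ξ₀ ∈ N_p and ‖A − ξ₀‖ = dist(A, N_p)). Moreover the minimum value equals (1/2)‖A‖² − (1/2)‖A − ξ₀‖². -/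
open scoped InnerProductSpace

/-- Duality lemma: at the metric projection `ξ₀` of a point onto `N`, one has
`p v ≤ ⟪ξ₀, v⟫` where `v` is the residual, via a Hahn–Banach separation argument
on the epigraph of `p` in `H × ℝ`. -/
lemma stmt5_dual {H : Type*} [NormedAddCommGroup H] [InnerProductSpace ℝ H] [CompleteSpace H]
    (p : H → EReal)
    (hp0 : p 0 = 0)
    (hpnn : ∀ x, 0 ≤ p x)
    (hlsc : LowerSemicontinuous p)
    (hconvex : ∀ x y : H, ∀ a b : ℝ, 0 ≤ a → 0 ≤ b → a + b = 1 →
      p (a • x + b • y) ≤ (a : EReal) * p x + (b : EReal) * p y)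
    (hphom : ∀ t : ℝ, 0 < t → ∀ x, p (t • x) = (t : EReal) * p x)
    (N : Set H)
    (hN : N = {ζ : H | ∀ x : H, (⟪ζ, x⟫_ℝ : EReal) ≤ p x})
    (ξ₀ v : H) (hξ₀mem : ξ₀ ∈ N)
    (hproj : ∀ ζ ∈ N, ⟪v, ζ - ξ₀⟫_ℝ ≤ 0) :
    p v ≤ ((⟪ξ₀, v⟫_ℝ : ℝ) : EReal) := by
  subst hN
  by_contra hlt
  push_neg at hlt
  set c := ⟪ξ₀, v⟫_ℝ with hc
  -- the epigraph of p in H × ℝ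
  set C : Set (H × ℝ) := {q | p q.1 ≤ ((q.2 : ℝ) : EReal)} with hCdef
  have hCconv : Convex ℝ C := by
    intro q hq r hr a b ha hb hab
    simp only [hCdef, Set.mem_setOf_eq] at hq hr ⊢
    have h1 : p (a • q.1 + b • r.1) ≤ (a : EReal) * p q.1 + (b : EReal) * p r.1 :=
      hconvex _ _ _ _ ha hb hab
    have h2 : (a : EReal) * p q.1 + (b : EReal) * p r.1
        ≤ (a : EReal) * (q.2 : EReal) + (b : EReal) * (r.2 : EReal) :=
      add_le_add (mul_le_mul_of_nonneg_left hq (by exact_mod_cast ha))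
        (mul_le_mul_of_nonneg_left hr (by exact_mod_cast hb))
    have h3 : ((a • q + b • r : H × ℝ).2 : EReal)
        = (a : EReal) * (q.2 : EReal) + (b : EReal) * (r.2 : EReal) := by
      have : (a • q + b • r : H × ℝ).2 = a * q.2 + b * r.2 := rfl
      rw [this, EReal.coe_add, EReal.coe_mul, EReal.coe_mul]
    have : (a • q + b • r : H × ℝ).1 = a • q.1 + b • r.1 := rfl
    rw [this, h3]
    exact h1.trans h2
  have hCclosed : IsClosed C := by
    rw [← isOpen_compl_iff]
    rw [isOpen_iff_mem_nhds]
    intro q hq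
    simp only [hCdef, Set.mem_compl_iff, Set.mem_setOf_eq, not_le] at hq
    obtain ⟨m, hm1, hm2⟩ := EReal.exists_between_coe_real hq
    have hU : IsOpen {x : H | (m : EReal) < p x} := by
      have := lowerSemicontinuous_iff_isOpen_preimage.mp hlsc m
      exact this
    have hmem : q ∈ {x : H | (m : EReal) < p x} ×ˢ Set.Iio m := by
      constructor
      · exact hm2
      · exact_mod_cast hm1
    have hopen : IsOpen ({x : H | (m : EReal) < p x} ×ˢ Set.Iio m) :=
      hU.prod isOpen_Iio
    refine Filter.mem_of_superset (hopen.mem_nhds hmem) ?_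
    rintro ⟨x, r⟩ ⟨hx, hr⟩
    simp only [Set.mem_compl_iff, hCdef, Set.mem_setOf_eq, not_le]
    refine lt_trans ?_ hx
    exact_mod_cast hr
  have hvc : ((v, c) : H × ℝ) ∉ C := by
    simp only [hCdef, Set.mem_setOf_eq, not_le]
    exact hlt
  obtain ⟨f, u, hfu, huf⟩ := geometric_hahn_banach_closed_point hCconv hCclosed hvc
  have h00 : ((0, 0) : H × ℝ) ∈ C := by
    simp only [hCdef, Set.mem_setOf_eq, hp0]
    exact le_refl _
  have hu0 : 0 < u := by
    have := hfu _ h00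
    rw [show ((0, 0) : H × ℝ) = 0 from rfl, map_zero] at this
    exact this
  -- since C is a cone, f ≤ 0 on C
  have hfle : ∀ q ∈ C, f q ≤ 0 := by
    intro q hq
    by_contra h
    push_neg at h
    set t : ℝ := 2 * u / f q with ht
    have htpos : 0 < t := by positivity
    have htq : t • q ∈ C := by
      simp only [hCdef, Set.mem_setOf_eq] at hq ⊢
      have h1 : (t • q : H × ℝ).1 = t • q.1 := rfl
      have h2 : (t • q : H × ℝ).2 = t * q.2 := rfl
      rw [h1, h2, hphom t htpos, EReal.coe_mul]
      exact mul_le_mul_of_nonneg_left hq (by exact_mod_cast htpos.le)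
    have := hfu _ htq
    rw [map_smul] at this
    have hft : t • f q = 2 * u := by
      rw [smul_eq_mul, ht, div_mul_cancel₀ _ (ne_of_gt h)]
    rw [hft] at this
    linarith
  -- decompose f
  set g : H →L[ℝ] ℝ := f.comp (ContinuousLinearMap.inl ℝ H ℝ) with hg
  set w : H := (InnerProductSpace.toDual ℝ H).symm g with hw
  set s : ℝ := f (0, 1) with hs
  have hwx : ∀ x : H, ⟪w, x⟫_ℝ = f (x, 0) := by
    intro x
    rw [hw]
    exact InnerProductSpace.toDual_symm_apply
  have hfxr : ∀ (x : H) (r : ℝ), f (x, r) = ⟪w, x⟫_ℝ + r * s := by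
    intro x r
    have hsplit : ((x, r) : H × ℝ) = (x, 0) + r • ((0 : H), (1 : ℝ)) := by
      simp [Prod.ext_iff]
    rw [hsplit, map_add, map_smul, hwx, smul_eq_mul, hs]
  have hs0 : s ≤ 0 := by
    have h01 : ((0, 1) : H × ℝ) ∈ C := by
      simp only [hCdef, Set.mem_setOf_eq, hp0]
      exact_mod_cast zero_le_one
    have := hfle _ h01
    rw [hfxr] at this
    simpa using this
  have hfvc : 0 < ⟪w, v⟫_ℝ + c * s := by
    have := lt_trans hu0 huf
    rwa [hfxr] at this
  -- key estimate on finite points of p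
  have hfin : ∀ x : H, p x ≠ ⊤ → ⟪w, x⟫_ℝ + (p x).toReal * s ≤ 0 := by
    intro x hx
    have hxbot : p x ≠ ⊥ := ne_of_gt (lt_of_lt_of_le EReal.bot_lt_zero (hpnn x))
    have hmem : ((x, (p x).toReal) : H × ℝ) ∈ C := by
      simp only [hCdef, Set.mem_setOf_eq]
      rw [EReal.coe_toReal hx hxbot]
    have := hfle _ hmem
    rwa [hfxr] at this
  rcases lt_or_eq_of_le hs0 with hsneg | hszero
  · -- case s < 0
    set ζ : H := (-s)⁻¹ • w with hζ
    have hspos : 0 < -s := by linarith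
    have hζmem : ζ ∈ {ζ : H | ∀ x : H, (⟪ζ, x⟫_ℝ : EReal) ≤ p x} := by
      intro x
      by_cases hx : p x = ⊤
      · rw [hx]; exact le_top
      · have hxbot : p x ≠ ⊥ := ne_of_gt (lt_of_lt_of_le EReal.bot_lt_zero (hpnn x))
        have h1 := hfin x hx
        have h2 : ⟪w, x⟫_ℝ ≤ (p x).toReal * (-s) := by nlinarith
        have h3 : ⟪ζ, x⟫_ℝ ≤ (p x).toReal := by
          rw [hζ, real_inner_smul_left]
          rw [inv_mul_le_iff₀ hspos, mul_comm]
          exact h2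
        calc ((⟪ζ, x⟫_ℝ : ℝ) : EReal) ≤ ((p x).toReal : EReal) := by exact_mod_cast h3
          _ = p x := EReal.coe_toReal hx hxbot
    have h4 := hproj ζ hζmem
    rw [inner_sub_right] at h4
    have h5 : ⟪v, ζ⟫_ℝ ≤ c := by
      have hcomm := real_inner_comm v ξ₀
      rw [hc]; linarith
    have h6 : ⟪v, ζ⟫_ℝ = (-s)⁻¹ * ⟪v, w⟫_ℝ := by
      rw [hζ, real_inner_smul_right]
    have h7 : ⟪v, w⟫_ℝ ≤ c * (-s) := by
      rw [h6] at h5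
      have := mul_le_mul_of_nonneg_left h5 hspos.le
      rw [← mul_assoc, mul_inv_cancel₀ (ne_of_gt hspos), one_mul] at this
      linarith
    have hcomm2 := real_inner_comm v w
    nlinarith
  · -- case s = 0
    have hw0 : ∀ x : H, p x ≠ ⊤ → ⟪w, x⟫_ℝ ≤ 0 := by
      intro x hx
      have := hfin x hx
      simp only [hszero, mul_zero, add_zero] at this
      exact this
    have hζmem : ξ₀ + w ∈ {ζ : H | ∀ x : H, (⟪ζ, x⟫_ℝ : EReal) ≤ p x} := by
      intro x
      by_cases hx : p x = ⊤
      · rw [hx]; exact le_top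
      · have h1 : ⟪ξ₀ + w, x⟫_ℝ ≤ ⟪ξ₀, x⟫_ℝ := by
          rw [inner_add_left]
          have := hw0 x hx
          linarith
        calc ((⟪ξ₀ + w, x⟫_ℝ : ℝ) : EReal) ≤ ((⟪ξ₀, x⟫_ℝ : ℝ) : EReal) := by exact_mod_cast h1
          _ ≤ p x := hξ₀mem x
    have h4 := hproj _ hζmem
    rw [add_sub_cancel_left] at h4
    simp only [hszero, mul_zero, add_zero] at hfvc
    have hcomm2 := real_inner_comm v w
    linarith

/-- For `p : H → [0,+∞]` convex, lsc, positively 1-homogeneous with `p 0 = 0`,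
`N_p = {ζ : ∀ x, ⟨ζ,x⟩ ≤ p x}`, and `A ∈ H`, the functional `ξ ↦ (1/2)‖ξ‖² + p(A - ξ)`
has a unique minimizer, namely the metric projection `ξ₀` of `A` onto `N_p`, and the
minimum value is `(1/2)‖A‖² - (1/2)‖A - ξ₀‖²`. -/
theorem stmt5 {H : Type*} [NormedAddCommGroup H] [InnerProductSpace ℝ H] [CompleteSpace H]
    (p : H → EReal)
    (hp0 : p 0 = 0)
    (hpnn : ∀ x, 0 ≤ p x)
    (hconvex : ∀ x y : H, ∀ a b : ℝ, 0 ≤ a → 0 ≤ b → a + b = 1 →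
      p (a • x + b • y) ≤ (a : EReal) * p x + (b : EReal) * p y)
    (hlsc : LowerSemicontinuous p)
    (hphom : ∀ t : ℝ, 0 < t → ∀ x, p (t • x) = (t : EReal) * p x)
    (N : Set H)
    (hN : N = {ζ : H | ∀ x : H, (⟪ζ, x⟫_ℝ : EReal) ≤ p x})
    (A ξ₀ : H)
    (hξ₀mem : ξ₀ ∈ N)
    (hξ₀dist : ‖A - ξ₀‖ = Metric.infDist A N)
    (E : H → EReal)
    (hE : ∀ ξ, E ξ = ((1/2 * ‖ξ‖^2 : ℝ) : EReal) + p (A - ξ)) :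
    (∀ ξ, E ξ₀ ≤ E ξ) ∧
    (∀ ξ, (∀ η, E ξ ≤ E η) → ξ = ξ₀) ∧
    E ξ₀ = ((1/2 * ‖A‖^2 - 1/2 * ‖A - ξ₀‖^2 : ℝ) : EReal) := by
  -- N is convex
  have hNconv : Convex ℝ N := by
    rw [hN]
    have : {ζ : H | ∀ x : H, (⟪ζ, x⟫_ℝ : EReal) ≤ p x}
        = ⋂ x : H, {ζ : H | (⟪ζ, x⟫_ℝ : EReal) ≤ p x} := by
      ext ζ; simp [Set.mem_iInter]
    rw [this]
    apply convex_iInter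
    intro x
    by_cases hx : p x = ⊤
    · have : {ζ : H | (⟪ζ, x⟫_ℝ : EReal) ≤ p x} = Set.univ := by
        ext ζ; simp [hx]
      rw [this]; exact convex_univ
    · have hxbot : p x ≠ ⊥ := ne_of_gt (lt_of_lt_of_le EReal.bot_lt_zero (hpnn x))
      have heq : {ζ : H | (⟪ζ, x⟫_ℝ : EReal) ≤ p x}
          = {ζ : H | ⟪ζ, x⟫_ℝ ≤ (p x).toReal} := by
        ext ζ
        simp only [Set.mem_setOf_eq]
        rw [← EReal.coe_toReal hx hxbot]
        exact_mod_cast Iff.rfl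
      rw [heq]
      exact convex_halfSpace_le
        ⟨fun a b => by rw [inner_add_left], fun c a => real_inner_smul_left a x c⟩ _
  -- the projection inequality
  have hproj : ∀ ζ ∈ N, ⟪A - ξ₀, ζ - ξ₀⟫_ℝ ≤ 0 := by
    have hiInf : ‖A - ξ₀‖ = ⨅ w : N, ‖A - w‖ := by
      rw [hξ₀dist, Metric.infDist_eq_iInf]
      congr 1
      ext w
      rw [dist_eq_norm]
    exact (norm_eq_iInf_iff_real_inner_le_zero hNconv hξ₀mem).mp hiInf
  have hproj' : ∀ ζ ∈ N, ⟪A - ξ₀, ζ - ξ₀⟫_ℝ ≤ 0 := hproj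
  -- duality at ξ₀
  have hdual : p (A - ξ₀) ≤ ((⟪ξ₀, A - ξ₀⟫_ℝ : ℝ) : EReal) :=
    stmt5_dual p hp0 hpnn hlsc hconvex hphom N hN ξ₀ (A - ξ₀) hξ₀mem hproj
  have hξ₀mem' : ∀ x : H, (⟪ξ₀, x⟫_ℝ : EReal) ≤ p x := by
    rw [hN] at hξ₀mem; exact hξ₀mem
  have hpval : p (A - ξ₀) = ((⟪ξ₀, A - ξ₀⟫_ℝ : ℝ) : EReal) :=
    le_antisymm hdual (hξ₀mem' (A - ξ₀))
  set m : ℝ := ⟪ξ₀, A⟫_ℝ - 1/2 * ‖ξ₀‖^2 with hm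
  have hEξ₀ : E ξ₀ = ((m : ℝ) : EReal) := by
    rw [hE, hpval, ← EReal.coe_add]
    congr 1
    rw [hm, inner_sub_right, real_inner_self_eq_norm_sq]
    ring
  have hmval : m = 1/2 * ‖A‖^2 - 1/2 * ‖A - ξ₀‖^2 := by
    rw [hm, norm_sub_sq_real, real_inner_comm A ξ₀]
    ring
  -- lower bound for E ξ
  have hlb : ∀ ξ : H, ((m + 1/2 * ‖ξ - ξ₀‖^2 : ℝ) : EReal) ≤ E ξ := by
    intro ξ
    rw [hE]
    have h1 : ((⟪ξ₀, A - ξ⟫_ℝ : ℝ) : EReal) ≤ p (A - ξ) := hξ₀mem' (A - ξ)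
    have h2 : ((m + 1/2 * ‖ξ - ξ₀‖^2 : ℝ) : EReal)
        = ((1/2 * ‖ξ‖^2 : ℝ) : EReal) + ((⟪ξ₀, A - ξ⟫_ℝ : ℝ) : EReal) := by
      rw [← EReal.coe_add]
      congr 1
      rw [hm, norm_sub_sq_real, inner_sub_right, real_inner_comm ξ ξ₀]
      ring
    rw [h2]
    exact add_le_add le_rfl h1
  refine ⟨?_, ?_, ?_⟩
  · intro ξ
    refine le_trans ?_ (hlb ξ)
    rw [hEξ₀]
    apply EReal.coe_le_coe_iff.mpr
    nlinarith [sq_nonneg ‖ξ - ξ₀‖]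
  · intro ξ hmin
    have h1 := le_trans (hlb ξ) (hmin ξ₀)
    rw [hEξ₀] at h1
    have h2 : m + 1/2 * ‖ξ - ξ₀‖^2 ≤ m := EReal.coe_le_coe_iff.mp h1
    have h3 : ‖ξ - ξ₀‖^2 ≤ 0 := by linarith
    have h4 : ‖ξ - ξ₀‖ = 0 := by nlinarith [norm_nonneg (ξ - ξ₀), sq_nonneg ‖ξ - ξ₀‖]
    have := norm_eq_zero.mp h4
    rwa [sub_eq_zero] at this
  · rw [hEξ₀, hmval]
end

section
/- Let H be a real Hilbert space, let p : H → [0, +∞] be convex, lower semicontinuous, positively 1-homogeneous, with p(0) = 0, and let N_p := {ζ ∈ H : ⟨ζ, x⟩ ≤ p(x) for all x ∈ H}. Fix A ∈ H and let ξ₀ be the metric projection of A onto N_p. Then the functional saturates its defining constraint along the residual: ⟨ξ₀, A − ξ₀⟩ = p(A − ξ₀); in particular p(A − ξ₀) < +∞. -/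
open scoped InnerProductSpace

private lemma ereal_finite_of_le_coe {e : EReal} {t : ℝ} (h0 : 0 ≤ e) (h : e ≤ (t : EReal)) :
    ∃ r : ℝ, e = (r : EReal) ∧ 0 ≤ r ∧ r ≤ t := by
  have hbot : e ≠ ⊥ := ((lt_of_lt_of_le (by simp) h0)).ne'
  have htop : e ≠ ⊤ := ne_top_of_le_ne_top (EReal.coe_ne_top t) h
  refine ⟨e.toReal, (EReal.coe_toReal htop hbot).symm, ?_, ?_⟩
  · have := EReal.coe_toReal htop hbot
    rw [← this] at h0
    exact_mod_cast h0
  · have := EReal.coe_toReal htop hbot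
    rw [← this] at h
    exact_mod_cast h

/-- For `p : H → [0,+∞]` convex, lsc, positively 1-homogeneous with `p 0 = 0`,
`N_p = {ζ : ∀ x, ⟨ζ,x⟩ ≤ p x}`, `A ∈ H` and `ξ₀` the metric projection of `A` onto `N_p`,
the constraint saturates along the residual: `⟨ξ₀, A - ξ₀⟩ = p (A - ξ₀)`; in particular
`p (A - ξ₀) < +∞`. -/
theorem stmt6 {H : Type*} [NormedAddCommGroup H] [InnerProductSpace ℝ H] [CompleteSpace H]
    (p : H → EReal)
    (hp0 : p 0 = 0)
    (hpnn : ∀ x, 0 ≤ p x)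
    (hconvex : ∀ x y : H, ∀ a b : ℝ, 0 ≤ a → 0 ≤ b → a + b = 1 →
      p (a • x + b • y) ≤ (a : EReal) * p x + (b : EReal) * p y)
    (hlsc : LowerSemicontinuous p)
    (hphom : ∀ t : ℝ, 0 < t → ∀ x, p (t • x) = (t : EReal) * p x)
    (N : Set H)
    (hN : N = {ζ : H | ∀ x : H, (⟪ζ, x⟫_ℝ : EReal) ≤ p x})
    (A ξ₀ : H)
    (hξ₀mem : ξ₀ ∈ N)
    (hξ₀dist : ‖A - ξ₀‖ = Metric.infDist A N) :
    p (A - ξ₀) = (⟪ξ₀, A - ξ₀⟫_ℝ : EReal) ∧ p (A - ξ₀) < ⊤ := by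
  set u := A - ξ₀ with hu
  set c := ⟪ξ₀, u⟫_ℝ with hc
  -- N is convex
  have hNconv : Convex ℝ N := by
    rw [hN]
    intro ζ₁ h1 ζ₂ h2 a b ha hb hab
    intro x
    by_cases htop : p x = ⊤
    · rw [htop]; exact le_top
    · obtain ⟨r, hr, hr0, -⟩ := ereal_finite_of_le_coe (hpnn x) (le_of_eq (EReal.coe_toReal htop ((lt_of_lt_of_le (by simp) (hpnn x))).ne').symm)
      have h1x : ⟪ζ₁, x⟫_ℝ ≤ r := by
        have := h1 x; rw [hr] at this; exact_mod_cast this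
      have h2x : ⟪ζ₂, x⟫_ℝ ≤ r := by
        have := h2 x; rw [hr] at this; exact_mod_cast this
      rw [hr]
      have : ⟪a • ζ₁ + b • ζ₂, x⟫_ℝ ≤ r := by
        rw [inner_add_left, real_inner_smul_left, real_inner_smul_left]
        nlinarith
      exact_mod_cast this
  -- projection characterization
  have hproj : ∀ w ∈ N, ⟪u, w⟫_ℝ ≤ c := by
    have h := (norm_eq_iInf_iff_real_inner_le_zero hNconv hξ₀mem (u := A)).mp ?_
    · intro w hw
      have := h w hw
      rw [inner_sub_right] at this
      have hcomm : ⟪u, ξ₀⟫_ℝ = c := by rw [hc, real_inner_comm]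
      linarith
    · rw [hξ₀dist, Metric.infDist_eq_iInf]
      congr 1; ext w; rw [dist_eq_norm]
  -- easy direction
  have hle : (c : EReal) ≤ p u := by
    rw [hN] at hξ₀mem
    exact hξ₀mem u
  -- hard direction
  have hge : p u ≤ (c : EReal) := by
    by_contra hcon
    push_neg at hcon
    set E : Set (H × ℝ) := {q | p q.1 ≤ ((q.2 : ℝ) : EReal)} with hE
    have hEclosed : IsClosed E := by
      have h1 : IsClosed {q : H × EReal | p q.1 ≤ q.2} := hlsc.isClosed_epigraph
      have : E = (fun q : H × ℝ => (q.1, (q.2 : EReal))) ⁻¹' {q : H × EReal | p q.1 ≤ q.2} := rfl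
      rw [this]
      exact h1.preimage (continuous_fst.prodMk (continuous_coe_real_ereal.comp continuous_snd))
    have hEconv : Convex ℝ E := by
      rintro ⟨x, t⟩ hx ⟨y, s⟩ hy a b ha hb hab
      simp only [hE, Set.mem_setOf_eq] at hx hy ⊢
      simp only [Prod.smul_mk, Prod.mk_add_mk, smul_eq_mul]
      obtain ⟨r1, hr1, hr10, hr1t⟩ := ereal_finite_of_le_coe (hpnn x) hx
      obtain ⟨r2, hr2, hr20, hr2s⟩ := ereal_finite_of_le_coe (hpnn y) hy
      calc p (a • x + b • y) ≤ (a : EReal) * p x + (b : EReal) * p y :=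
            hconvex x y a b ha hb hab
        _ = ((a * r1 + b * r2 : ℝ) : EReal) := by
            rw [hr1, hr2, ← EReal.coe_mul, ← EReal.coe_mul, ← EReal.coe_add]
        _ ≤ ((a * t + b * s : ℝ) : EReal) := by
            apply EReal.coe_le_coe_iff.mpr
            nlinarith
    have hnotmem : (u, c) ∉ E := by
      simp only [hE, Set.mem_setOf_eq]
      exact not_le.mpr hcon
    obtain ⟨f, α, hfa, hfx⟩ := geometric_hahn_banach_closed_point hEconv hEclosed hnotmem
    set ζ := (InnerProductSpace.toDual ℝ H).symm (f.comp (ContinuousLinearMap.inl ℝ H ℝ)) with hζdef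
    set s0 := f (0, 1) with hs0def
    have hζ : ∀ x : H, ⟪ζ, x⟫_ℝ = f (x, 0) := by
      intro x
      rw [hζdef, InnerProductSpace.toDual_symm_apply]
      rfl
    have hf : ∀ (x : H) (t : ℝ), f (x, t) = ⟪ζ, x⟫_ℝ + t * s0 := by
      intro x t
      have hsplit : (x, t) = (x, (0 : ℝ)) + t • ((0 : H), (1 : ℝ)) := by
        simp [Prod.ext_iff]
      rw [hsplit, map_add, map_smul, hζ, smul_eq_mul, hs0def]
    have hα0 : 0 < α := by
      have h00 : ((0 : H), (0 : ℝ)) ∈ E := by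
        simp only [hE, Set.mem_setOf_eq, hp0]
        exact_mod_cast le_refl (0 : EReal)
      have := hfa _ h00
      have hz : f ((0 : H), (0 : ℝ)) = 0 := by
        have : ((0 : H), (0 : ℝ)) = (0 : H × ℝ) := rfl
        rw [this, map_zero]
      linarith [hz ▸ this]
    -- key scaling inequality
    have key : ∀ (x : H) (t : ℝ), p x ≤ (t : EReal) → ⟪ζ, x⟫_ℝ + t * s0 ≤ 0 := by
      intro x t hxt
      by_contra hpos
      push_neg at hpos
      set d := ⟪ζ, x⟫_ℝ + t * s0 with hd
      have hlam : 0 < α / d := div_pos hα0 hpos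
      have hmem : ((α / d) • x, (α / d) * t) ∈ E := by
        simp only [hE, Set.mem_setOf_eq]
        obtain ⟨r, hr, hr0, hrt⟩ := ereal_finite_of_le_coe (hpnn x) hxt
        rw [hphom _ hlam, hr, ← EReal.coe_mul]
        apply EReal.coe_le_coe_iff.mpr
        nlinarith
      have := hfa _ hmem
      rw [hf] at this
      rw [real_inner_smul_right] at this
      have : (α / d) * d < α := by rw [hd]; ring_nf; ring_nf at this; linarith
      rw [div_mul_cancel₀ _ (ne_of_gt hpos)] at this
      exact lt_irrefl _ this
    have hs0 : s0 ≤ 0 := by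
      have := key 0 1 (by rw [hp0]; exact_mod_cast zero_le_one)
      simp only [inner_zero_right] at this
      linarith
    have hupos : α < ⟪ζ, u⟫_ℝ + c * s0 := by rw [← hf]; exact hfx
    rcases lt_or_eq_of_le hs0 with hs0neg | hs0zero
    · -- s0 < 0 : ζ' = (-s0)⁻¹ • ζ ∈ N
      have hmemN : (-s0)⁻¹ • ζ ∈ N := by
        rw [hN]
        intro x
        by_cases htop : p x = ⊤
        · rw [htop]; exact le_top
        · obtain ⟨r, hr, hr0, -⟩ := ereal_finite_of_le_coe (hpnn x) (le_of_eq (EReal.coe_toReal htop ((lt_of_lt_of_le (by simp) (hpnn x))).ne').symm)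
          have hk := key x r (le_of_eq hr)
          rw [hr]
          have : ⟪(-s0)⁻¹ • ζ, x⟫_ℝ ≤ r := by
            rw [real_inner_smul_left]
            have hns : 0 < -s0 := by linarith
            rw [inv_mul_le_iff₀ hns]
            nlinarith
          exact_mod_cast this
      have := hproj _ hmemN
      rw [real_inner_smul_right] at this
      have hns : 0 < -s0 := by linarith
      have hinner : ⟪u, ζ⟫_ℝ = ⟪ζ, u⟫_ℝ := real_inner_comm _ _
      rw [hinner] at this
      -- (-s0)⁻¹ * ⟪ζ,u⟫ ≤ c, so ⟪ζ,u⟫ ≤ -s0 * c, so ⟪ζ,u⟫ + c*s0 ≤ 0 < α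
      have h1 : ⟪ζ, u⟫_ℝ ≤ (-s0) * c := by
        rw [inv_mul_le_iff₀ hns] at this
        linarith [this]
      nlinarith
    · -- s0 = 0 : ξ₀ + ζ ∈ N
      have hmemN : ξ₀ + ζ ∈ N := by
        rw [hN]
        intro x
        by_cases htop : p x = ⊤
        · rw [htop]; exact le_top
        · obtain ⟨r, hr, hr0, -⟩ := ereal_finite_of_le_coe (hpnn x) (le_of_eq (EReal.coe_toReal htop ((lt_of_lt_of_le (by simp) (hpnn x))).ne').symm)
          have hk := key x r (le_of_eq hr)
          rw [← hs0zero] at hk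
          have hξx : ⟪ξ₀, x⟫_ℝ ≤ r := by
            rw [hN] at hξ₀mem
            have := hξ₀mem x
            rw [hr] at this
            exact_mod_cast this
          rw [hr]
          have : ⟪ξ₀ + ζ, x⟫_ℝ ≤ r := by
            rw [inner_add_left]
            nlinarith
          exact_mod_cast this
      have := hproj _ hmemN
      rw [inner_add_right] at this
      have hcomm : ⟪u, ξ₀⟫_ℝ = c := by rw [hc, real_inner_comm]
      have hcomm2 : ⟪u, ζ⟫_ℝ = ⟪ζ, u⟫_ℝ := real_inner_comm _ _
      rw [hcomm, hcomm2] at this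
      rw [hs0zero] at hupos
      nlinarith
  have heq : p u = (c : EReal) := le_antisymm hge hle
  exact ⟨heq, heq ▸ EReal.coe_lt_top c⟩
end

section
/- Let V be a real normed vector space, let f, g : V → ℝ be convex functions with f(x) ≤ g(x) for all x ∈ V, and let x₀ ∈ V be a point with f(x₀) = g(x₀). Assume there is a constant C ≥ 0 such that g(x) ≤ f(x) + C‖x − x₀‖² for all x ∈ V. Then x₀ minimizes f over V if and only if x₀ minimizes g over V. -/
/-- If `f ≤ g` are convex functions on a normed space agreeing at `x₀`, and
`g ≤ f + C‖· - x₀‖²` for some `C ≥ 0`, then `x₀` minimizes `f` iff it minimizes `g`. -/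
theorem stmt9 {V : Type*} [NormedAddCommGroup V] [NormedSpace ℝ V]
    (f g : V → ℝ)
    (hf : ConvexOn ℝ Set.univ f)
    (hg : ConvexOn ℝ Set.univ g)
    (hle : ∀ x, f x ≤ g x)
    (x₀ : V) (heq : f x₀ = g x₀)
    (C : ℝ) (hC : 0 ≤ C)
    (hquad : ∀ x, g x ≤ f x + C * ‖x - x₀‖^2) :
    (∀ x, f x₀ ≤ f x) ↔ (∀ x, g x₀ ≤ g x) := by
  constructor
  · intro hmin x
    calc g x₀ = f x₀ := heq.symm
    _ ≤ f x := hmin x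
    _ ≤ g x := hle x
  · intro hmin x
    by_contra hlt
    push_neg at hlt
    set a : ℝ := f x₀ - f x with ha
    have ha0 : 0 < a := by simp [ha]; linarith
    set d : ℝ := ‖x - x₀‖ ^ 2 with hd
    have hd0 : 0 ≤ d := sq_nonneg _
    have hden : 0 < C * d + a := by nlinarith
    set t : ℝ := a / (C * d + a) with ht
    have ht0 : 0 < t := div_pos ha0 hden
    have ht1 : t ≤ 1 := by
      rw [ht, div_le_one hden]; nlinarith
    set y := (1 - t) • x₀ + t • x with hy
    have hconv : f y ≤ (1 - t) * f x₀ + t * f x :=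
      hf.2 (Set.mem_univ x₀) (Set.mem_univ x) (by linarith) (le_of_lt ht0) (by ring)
    have hnorm : ‖y - x₀‖ ^ 2 = t ^ 2 * d := by
      have : y - x₀ = t • (x - x₀) := by
        rw [hy]; module
      rw [this, norm_smul, hd]
      rw [Real.norm_eq_abs, abs_of_pos ht0]
      ring
    have h1 : g x₀ ≤ g y := hmin y
    have h2 : g y ≤ f y + C * (t ^ 2 * d) := by
      have := hquad y; rwa [hnorm] at this
    have hkey : t * a ≤ C * t ^ 2 * d := by
      have : f x₀ ≤ (1 - t) * f x₀ + t * f x + C * (t ^ 2 * d) := by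
        calc f x₀ = g x₀ := heq
        _ ≤ g y := h1
        _ ≤ f y + C * (t ^ 2 * d) := h2
        _ ≤ (1 - t) * f x₀ + t * f x + C * (t ^ 2 * d) := by linarith
      nlinarith [this]
    have hkey2 : a ≤ C * t * d := by
      have := mul_le_mul_of_nonneg_left hkey (le_of_lt (inv_pos.mpr ht0))
      calc a = t⁻¹ * (t * a) := by field_simp
      _ ≤ t⁻¹ * (C * t ^ 2 * d) := this
      _ = C * t * d := by field_simp
    -- but C * t * d = C * d * a / (C*d + a) < a
    have : C * t * d < a := by
      rw [ht, show C * (a / (C * d + a)) * d = C * a * d / (C * d + a) by ring,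
        div_lt_iff₀ hden]
      nlinarith
    linarith
end

section
/- Let a : ℝ³ → ℝ be continuous with a(x) ≥ 0 for all x and a(x) → +∞ as |x| → +∞ (i.e. a tends to +∞ along the cocompact filter). Then for every m > 0 there exists a unique λ ∈ ℝ such that ∫_{ℝ³} max(λ − a(x), 0) dx = m. (For every λ ∈ ℝ the function x ↦ max(λ − a(x), 0) is integrable with respect to Lebesgue measure, since it is bounded and supported in the compact set {a ≤ λ}.) -/
open MeasureTheory Filter Metric Set

namespace Stmt10Aux

abbrev E3 := EuclideanSpace ℝ (Fin 3)

noncomputable def F (a : E3 → ℝ) (lam : ℝ) : ℝ := ∫ x : E3, max (lam - a x) 0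

variable {a : E3 → ℝ}

lemma compact_sub (hcont : Continuous a)
    (hcoercive : Tendsto a (cocompact E3) atTop) (c : ℝ) :
    IsCompact {x : E3 | a x ≤ c} := by
  have h := hcoercive.eventually (eventually_gt_atTop c)
  rw [Filter.eventually_iff, mem_cocompact] at h
  obtain ⟨K, hK, hKs⟩ := h
  refine hK.of_isClosed_subset (isClosed_le hcont continuous_const) ?_
  intro x hx
  simp only [Set.mem_setOf_eq] at hx
  by_contra hxK
  have h2 := hKs hxK
  simp only [Set.mem_setOf_eq] at h2
  linarith

lemma meas_sub (hcont : Continuous a) (c : ℝ) :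
    MeasurableSet {x : E3 | a x ≤ c} :=
  (isClosed_le hcont continuous_const).measurableSet

lemma integ (hcont : Continuous a) (hcoercive : Tendsto a (cocompact E3) atTop) (lam : ℝ) :
    Integrable (fun x : E3 => max (lam - a x) 0) := by
  refine Continuous.integrable_of_hasCompactSupport
    ((continuous_const.sub hcont).max continuous_const) ?_
  refine HasCompactSupport.intro (compact_sub hcont hcoercive lam) ?_
  intro x hx
  simp only [Set.mem_setOf_eq, not_le] at hx
  exact max_eq_right (by linarith)

lemma indic_integ (hcont : Continuous a) (hcoercive : Tendsto a (cocompact E3) atTop)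
    (c r : ℝ) :
    Integrable (Set.indicator {x : E3 | a x ≤ c} (fun _ => r)) := by
  rw [integrable_indicator_iff (meas_sub hcont c)]
  exact integrableOn_const (compact_sub hcont hcoercive c).measure_lt_top.ne

lemma F_mono (hcont : Continuous a) (hcoercive : Tendsto a (cocompact E3) atTop) :
    Monotone (F a) := by
  intro lam mu hlm
  refine integral_mono (integ hcont hcoercive lam) (integ hcont hcoercive mu) ?_
  intro x
  exact max_le_max (by linarith) le_rfl

lemma F_lip (hcont : Continuous a) (hcoercive : Tendsto a (cocompact E3) atTop)
    {lam mu c : ℝ} (hlm : lam ≤ mu) (hmc : mu ≤ c) :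
    F a mu - F a lam ≤ (mu - lam) * (volume {x : E3 | a x ≤ c}).toReal := by
  have hpt : ∀ x : E3, max (mu - a x) 0 ≤ max (lam - a x) 0 +
      Set.indicator {x : E3 | a x ≤ c} (fun _ => mu - lam) x := by
    intro x
    by_cases h : a x ≤ mu
    · rw [Set.indicator_of_mem (by simp only [Set.mem_setOf_eq]; linarith)]
      refine max_le (by linarith [le_max_left (lam - a x) 0]) ?_
      linarith [le_max_right (lam - a x) 0]
    · push_neg at h
      rw [max_eq_right (by linarith)]
      have h1 : (0:ℝ) ≤ max (lam - a x) 0 := le_max_right _ _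
      have h2 : (0:ℝ) ≤ Set.indicator {x : E3 | a x ≤ c} (fun _ => mu - lam) x :=
        Set.indicator_nonneg (fun _ _ => by linarith) x
      linarith
  have hI := integral_mono (integ hcont hcoercive mu)
    ((integ hcont hcoercive lam).add (indic_integ hcont hcoercive c (mu - lam))) hpt
  simp only [Pi.add_apply] at hI
  rw [integral_add (integ hcont hcoercive lam) (indic_integ hcont hcoercive c (mu - lam)),
    integral_indicator_const _ (meas_sub hcont c)] at hI
  have : F a mu ≤ F a lam + (volume {x : E3 | a x ≤ c}).toReal * (mu - lam) := hI
  linarith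

lemma F_cont (hcont : Continuous a) (hcoercive : Tendsto a (cocompact E3) atTop) :
    Continuous (F a) := by
  rw [continuous_iff_continuousAt]
  intro x₀
  have hK : LipschitzOnWith (volume {x : E3 | a x ≤ x₀ + 1}).toNNReal (F a)
      (Set.Iic (x₀ + 1)) := by
    refine LipschitzOnWith.of_dist_le_mul ?_
    intro x hx y hy
    rcases le_total y x with hxy | hxy
    · rw [Real.dist_eq, Real.dist_eq,
        abs_of_nonneg (sub_nonneg.2 (F_mono hcont hcoercive hxy)),
        abs_of_nonneg (sub_nonneg.2 hxy)]
      have := F_lip hcont hcoercive hxy (mem_Iic.1 hx)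
      calc F a x - F a y ≤ (x - y) * (volume {x : E3 | a x ≤ x₀ + 1}).toReal := this
        _ = ((volume {x : E3 | a x ≤ x₀ + 1}).toNNReal : ℝ) * (x - y) := by
            rw [ENNReal.coe_toNNReal_eq_toReal]; ring
    · rw [Real.dist_eq, Real.dist_eq,
        abs_sub_comm, abs_sub_comm x y,
        abs_of_nonneg (sub_nonneg.2 (F_mono hcont hcoercive hxy)),
        abs_of_nonneg (sub_nonneg.2 hxy)]
      have := F_lip hcont hcoercive hxy (mem_Iic.1 hy)
      calc F a y - F a x ≤ (y - x) * (volume {x : E3 | a x ≤ x₀ + 1}).toReal := this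
        _ = ((volume {x : E3 | a x ≤ x₀ + 1}).toNNReal : ℝ) * (y - x) := by
            rw [ENNReal.coe_toNNReal_eq_toReal]; ring
  exact hK.continuousOn.continuousAt (Iic_mem_nhds (lt_add_one x₀))

lemma F_zero (hnonneg : ∀ x, 0 ≤ a x) : F a 0 = 0 := by
  have hfun : (fun x : E3 => max ((0:ℝ) - a x) 0) = fun _ => (0:ℝ) :=
    funext fun x => max_eq_right (by linarith [hnonneg x])
  rw [F, hfun, integral_zero]

/-- Strict monotonicity where `F` is positive. -/
lemma F_strict (hcont : Continuous a) (hcoercive : Tendsto a (cocompact E3) atTop)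
    {lam mu : ℝ} (hlm : lam < mu) (hpos : 0 < F a lam) :
    F a lam < F a mu := by
  set S : Set E3 := {x | a x < lam} with hS
  have hSmeas : MeasurableSet S := (isOpen_lt hcont continuous_const).measurableSet
  have hSsub : S ⊆ {x : E3 | a x ≤ lam} := by
    intro x hx
    simp only [hS, Set.mem_setOf_eq] at hx ⊢
    exact hx.le
  have hSfin : volume S < ⊤ :=
    lt_of_le_of_lt (measure_mono hSsub) (compact_sub hcont hcoercive lam).measure_lt_top
  have hSpos : 0 < volume S := by
    by_contra h
    push_neg at h
    have h0 : volume S = 0 := le_antisymm h bot_le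
    have hae : (fun x : E3 => max (lam - a x) 0) =ᵐ[volume] 0 := by
      have h1 : ∀ᵐ x : E3, x ∉ S := measure_eq_zero_iff_ae_notMem.1 h0
      filter_upwards [h1] with x hx
      simp only [hS, Set.mem_setOf_eq, not_lt] at hx
      simp only [Pi.zero_apply]
      exact max_eq_right (by linarith)
    have : F a lam = 0 := integral_eq_zero_of_ae hae
    linarith
  have hindic : Integrable (Set.indicator S (fun _ => mu - lam)) := by
    rw [integrable_indicator_iff hSmeas]
    exact integrableOn_const hSfin.ne
  have hpt : ∀ x : E3, max (lam - a x) 0 + Set.indicator S (fun _ => mu - lam) x ≤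
      max (mu - a x) 0 := by
    intro x
    by_cases h : x ∈ S
    · rw [Set.indicator_of_mem h]
      have hx : a x < lam := h
      rw [max_eq_left (by linarith), max_eq_left (by linarith)]
      linarith
    · rw [Set.indicator_of_notMem h, add_zero]
      exact max_le_max (by linarith) le_rfl
  have hI := integral_mono ((integ hcont hcoercive lam).add hindic)
    (integ hcont hcoercive mu) hpt
  simp only [Pi.add_apply] at hI
  rw [integral_add (integ hcont hcoercive lam) hindic,
    integral_indicator_const _ hSmeas] at hI
  have hvol : 0 < (volume S).toReal := ENNReal.toReal_pos hSpos.ne' hSfin.ne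
  have : F a lam + (volume S).toReal * (mu - lam) ≤ F a mu := hI
  nlinarith

end Stmt10Aux

open Stmt10Aux in
/-- If `a : ℝ³ → ℝ` is continuous, nonnegative and tends to `+∞` at infinity,
then for every `m > 0` there is a unique `λ ∈ ℝ` with `∫ max (λ - a x) 0 dx = m`. -/
theorem stmt10
    (a : EuclideanSpace ℝ (Fin 3) → ℝ)
    (hcont : Continuous a)
    (hnonneg : ∀ x, 0 ≤ a x)
    (hcoercive : Tendsto a (cocompact (EuclideanSpace ℝ (Fin 3))) atTop) :
    ∀ m : ℝ, 0 < m → ∃! lam : ℝ, (∫ x : EuclideanSpace ℝ (Fin 3), max (lam - a x) 0) = m := by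
  intro m hm
  -- bound `a` on the unit ball
  obtain ⟨x₀, hx₀B, hx₀⟩ := (isCompact_closedBall (0 : E3) 1).exists_isMaxOn
    (Metric.nonempty_closedBall.2 zero_le_one) hcont.continuousOn
  set C₀ := a x₀ with hC₀
  have hC₀0 : 0 ≤ C₀ := hnonneg x₀
  set B := Metric.closedBall (0 : E3) 1 with hB
  have hBmeas : MeasurableSet B := measurableSet_closedBall
  have hBfin : volume B < ⊤ := (isCompact_closedBall _ _).measure_lt_top
  have hBpos : 0 < volume B := measure_closedBall_pos volume (0 : E3) one_pos
  set v := (volume B).toReal with hv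
  have hv0 : 0 < v := ENNReal.toReal_pos hBpos.ne' hBfin.ne
  set Λ := C₀ + m / v with hΛ
  have hΛ0 : (0:ℝ) ≤ Λ := by positivity
  -- F Λ ≥ m
  have hFΛ : m ≤ F a Λ := by
    have hindic : Integrable (Set.indicator B (fun _ => Λ - C₀)) := by
      rw [integrable_indicator_iff hBmeas]
      exact integrableOn_const hBfin.ne
    have hpt : ∀ x : E3, Set.indicator B (fun _ => Λ - C₀) x ≤ max (Λ - a x) 0 := by
      intro x
      by_cases h : x ∈ B
      · rw [Set.indicator_of_mem h]
        have hax : a x ≤ C₀ := hx₀ h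
        have : Λ - C₀ ≤ Λ - a x := by linarith
        exact le_trans this (le_max_left _ _)
      · rw [Set.indicator_of_notMem h]
        exact le_max_right _ _
    have hI := integral_mono hindic (integ hcont hcoercive Λ) hpt
    rw [integral_indicator_const _ hBmeas] at hI
    have hval : v * (Λ - C₀) = m := by
      rw [hΛ]
      field_simp
      ring
    calc m = v * (Λ - C₀) := hval.symm
      _ ≤ F a Λ := hI
  -- existence via IVT
  have hsur : m ∈ F a '' Set.Icc 0 Λ := by
    apply intermediate_value_Icc hΛ0 (F_cont hcont hcoercive).continuousOn
    rw [F_zero hnonneg]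
    exact ⟨hm.le, hFΛ⟩
  obtain ⟨lam, _, hlam⟩ := hsur
  refine ⟨lam, hlam, ?_⟩
  intro y hy
  by_contra hne
  rcases lt_or_gt_of_ne hne with h | h
  · have : F a y < F a lam := F_strict hcont hcoercive h (by rw [show F a y = m from hy]; exact hm)
    rw [show F a y = m from hy, show F a lam = m from hlam] at this
    exact lt_irrefl m this
  · have : F a lam < F a y := F_strict hcont hcoercive h (by rw [show F a lam = m from hlam]; exact hm)
    rw [show F a y = m from hy, show F a lam = m from hlam] at this
    exact lt_irrefl m this
end

section
/- Let H be a real Hilbert space, let p : H → [0, +∞] be convex, lower semicontinuous, positively 1-homogeneous with p(0) = 0, let N_p := {ζ ∈ H : ⟨ζ, x⟩ ≤ p(x) for all x ∈ H}, and let e ∈ H. Then x₀ ∈ H minimizes the functional F(x) := (1/2)‖x‖² + p(x + e) over H if and only if −x₀ ∈ N_p and ‖e + x₀‖ = dist(e, N_p) (equivalently, −x₀ is the unique minimizer of ζ ↦ ‖ζ − e‖² over N_p); in particular F has a unique minimizer, namely x₀ = −proj_{N_p}(e). -/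
open scoped InnerProductSpace

lemma vi_aux {H : Type*} [NormedAddCommGroup H] [InnerProductSpace ℝ H]
    {N : Set H} (hconv : Convex ℝ N) {e ξ₀ : H} (hmem : ξ₀ ∈ N)
    (hmin : ∀ ζ ∈ N, ‖e - ξ₀‖ ≤ ‖e - ζ‖) {ζ : H} (hζ : ζ ∈ N) :
    ⟪e - ξ₀, ζ - ξ₀⟫_ℝ ≤ 0 := by
  set a := ⟪e - ξ₀, ζ - ξ₀⟫_ℝ with ha'
  set b := ‖ζ - ξ₀‖ ^ 2 with hb'
  have hkey : ∀ t : ℝ, 0 < t → t ≤ 1 → a ≤ t * b / 2 := by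
    intro t ht ht1
    have hw : ξ₀ + t • (ζ - ξ₀) ∈ N := by
      have h0 := hconv hmem hζ (by linarith : (0:ℝ) ≤ 1 - t) ht.le (by ring)
      have h2 : ξ₀ + t • (ζ - ξ₀) = (1 - t) • ξ₀ + t • ζ := by
        rw [smul_sub, sub_smul, one_smul]; abel
      rw [h2]; exact h0
    have h1 := hmin _ hw
    have h2 : e - (ξ₀ + t • (ζ - ξ₀)) = (e - ξ₀) - t • (ζ - ξ₀) := by abel
    have h3 : ‖e - ξ₀‖ ^ 2 ≤ ‖(e - ξ₀) - t • (ζ - ξ₀)‖ ^ 2 := by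
      rw [← h2]; exact pow_le_pow_left₀ (norm_nonneg _) h1 2
    have hexp : ‖(e - ξ₀) - t • (ζ - ξ₀)‖ ^ 2 = ‖e - ξ₀‖ ^ 2 - 2 * (t * a) + t ^ 2 * b := by
      rw [norm_sub_sq_real, real_inner_smul_right, norm_smul, Real.norm_eq_abs, abs_of_pos ht]
      ring
    rw [hexp] at h3
    nlinarith [h3]
  by_contra ha
  push_neg at ha
  have hb0 : 0 ≤ b := sq_nonneg _
  have ht : 0 < min 1 (a / (b + 1)) := lt_min one_pos (div_pos ha (by linarith))
  have h := hkey _ ht (min_le_left _ _)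
  have h2 : min 1 (a / (b + 1)) ≤ a / (b + 1) := min_le_right _ _
  have h3 : min 1 (a / (b + 1)) * b ≤ (a / (b + 1)) * b := mul_le_mul_of_nonneg_right h2 hb0
  have h4 : (a / (b + 1)) * b < a * 1 := by
    rw [div_mul_eq_mul_div, div_lt_iff₀ (by linarith : (0:ℝ) < b + 1)]
    nlinarith
  linarith

lemma sep_aux {H : Type*} [NormedAddCommGroup H] [InnerProductSpace ℝ H] [CompleteSpace H]
    (p : H → EReal) (hp0 : p 0 = 0) (hpnn : ∀ x, 0 ≤ p x)
    (hconvex : ∀ x y : H, ∀ a b : ℝ, 0 ≤ a → 0 ≤ b → a + b = 1 →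
      p (a • x + b • y) ≤ (a : EReal) * p x + (b : EReal) * p y)
    (hlsc : LowerSemicontinuous p)
    (hphom : ∀ t : ℝ, 0 < t → ∀ x, p (t • x) = (t : EReal) * p x)
    (ξ₀ v : H)
    (hξ₀N : ∀ x : H, (⟪ξ₀, x⟫_ℝ : EReal) ≤ p x)
    (hVI : ∀ ζ : H, (∀ x : H, (⟪ζ, x⟫_ℝ : EReal) ≤ p x) → ⟪ζ, v⟫_ℝ ≤ ⟪ξ₀, v⟫_ℝ) :
    p v ≤ ((⟪ξ₀, v⟫_ℝ : ℝ) : EReal) := by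
  have hpbot : ∀ x : H, p x ≠ ⊥ := by
    intro x hx
    have := hpnn x
    rw [hx, le_bot_iff] at this
    simp at this
  by_contra hlt
  push_neg at hlt
  set c : ℝ := ⟪ξ₀, v⟫_ℝ with hc
  set S : Set (H × ℝ) := {q | p q.1 ≤ (q.2 : EReal)} with hS
  have hSclosed : IsClosed S := by
    have h1 : IsClosed {q : H × EReal | p q.1 ≤ q.2} := hlsc.isClosed_epigraph
    have h2 : Continuous fun q : H × ℝ => ((q.1, (q.2 : EReal)) : H × EReal) :=
      continuous_fst.prodMk (continuous_coe_real_ereal.comp continuous_snd)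
    exact h1.preimage h2
  have hSconv : Convex ℝ S := by
    rintro ⟨x, t⟩ hq ⟨y, r⟩ hr a b ha hb hab
    simp only [hS, Set.mem_setOf_eq, Prod.smul_mk, Prod.mk_add_mk, smul_eq_mul] at *
    refine (hconvex x y a b ha hb hab).trans ?_
    rw [EReal.coe_add, EReal.coe_mul, EReal.coe_mul]
    exact add_le_add (mul_le_mul_of_nonneg_left hq (by exact_mod_cast ha))
      (mul_le_mul_of_nonneg_left hr (by exact_mod_cast hb))
  have hvc : (v, c) ∉ S := by
    simp only [hS, Set.mem_setOf_eq]
    exact not_le.2 hlt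
  obtain ⟨f, u, hfu, huf⟩ := geometric_hahn_banach_closed_point hSconv hSclosed hvc
  have h00 : ((0 : H), (0 : ℝ)) ∈ S := by
    simp only [hS, Set.mem_setOf_eq, hp0, EReal.coe_zero, le_refl]
  have hu0 : 0 < u := by
    have h := hfu _ h00
    rwa [show ((0 : H), (0 : ℝ)) = (0 : H × ℝ) from rfl, map_zero] at h
  have hcone : ∀ a ∈ S, ∀ r : ℝ, 0 < r → r • a ∈ S := by
    rintro ⟨x, t⟩ ha r hr
    simp only [hS, Set.mem_setOf_eq, Prod.smul_mk, smul_eq_mul] at *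
    rw [hphom r hr, EReal.coe_mul]
    exact mul_le_mul_of_nonneg_left ha (by exact_mod_cast hr.le)
  have hfle : ∀ a ∈ S, f a ≤ 0 := by
    intro a ha
    by_contra hpos
    push_neg at hpos
    have h2 := hfu _ (hcone a ha ((u + 1) / f a) (by positivity))
    rw [map_smul, smul_eq_mul, div_mul_cancel₀ _ (ne_of_gt hpos)] at h2
    linarith
  set s : ℝ := f ((0 : H), (1 : ℝ)) with hsdef
  have hs : s ≤ 0 := by
    refine hfle _ ?_
    simp only [hS, Set.mem_setOf_eq, hp0]
    exact_mod_cast zero_le_one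
  have hsplit : ∀ (x : H) (t : ℝ), f (x, t) = f (x, 0) + t * s := by
    intro x t
    have h : (x, t) = (x, (0 : ℝ)) + t • ((0 : H), (1 : ℝ)) := by
      simp [Prod.ext_iff]
    rw [h, map_add, map_smul, smul_eq_mul]
  have hkey : ∀ x : H, p x ≠ ⊤ → f (x, 0) + (p x).toReal * s ≤ 0 := by
    intro x hx
    rw [← hsplit]
    refine hfle _ ?_
    simp only [hS, Set.mem_setOf_eq]
    rw [EReal.coe_toReal hx (hpbot x)]
  set g := (InnerProductSpace.toDual ℝ H).symm (f.comp (ContinuousLinearMap.inl ℝ H ℝ)) with hgdef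
  have hg : ∀ x : H, ⟪g, x⟫_ℝ = f (x, 0) := by
    intro x
    rw [hgdef, InnerProductSpace.toDual_symm_apply]
    simp
  have hposvc : 0 < f (v, 0) + c * s := by
    have h := huf
    rw [hsplit v c] at h
    linarith
  rcases lt_or_eq_of_le hs with hslt | hseq
  · -- s < 0
    have hspos : 0 < -s := neg_pos.2 hslt
    have hζmem : ∀ x : H, (⟪(-s)⁻¹ • g, x⟫_ℝ : EReal) ≤ p x := by
      intro x
      by_cases hx : p x = ⊤
      · rw [hx]; exact le_top
      · have h1 := hkey x hx
        have h2 : ⟪(-s)⁻¹ • g, x⟫_ℝ ≤ (p x).toReal := by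
          rw [real_inner_smul_left, hg, inv_mul_le_iff₀ hspos]
          nlinarith
        calc (⟪(-s)⁻¹ • g, x⟫_ℝ : EReal) ≤ ((p x).toReal : EReal) := by exact_mod_cast h2
          _ = p x := EReal.coe_toReal hx (hpbot x)
    have h3 := hVI _ hζmem
    rw [real_inner_smul_left, hg, inv_mul_le_iff₀ hspos] at h3
    nlinarith
  · -- s = 0
    have hmem : ∀ x : H, (⟪ξ₀ + g, x⟫_ℝ : EReal) ≤ p x := by
      intro x
      by_cases hx : p x = ⊤
      · rw [hx]; exact le_top
      · have h1 := hkey x hx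
        rw [hseq, mul_zero, add_zero] at h1
        have hξx : ⟪ξ₀, x⟫_ℝ ≤ (p x).toReal := by
          have := hξ₀N x
          rw [← EReal.coe_toReal hx (hpbot x)] at this
          exact_mod_cast this
        have h2 : ⟪ξ₀ + g, x⟫_ℝ ≤ (p x).toReal := by
          rw [inner_add_left, hg]; linarith
        calc (⟪ξ₀ + g, x⟫_ℝ : EReal) ≤ ((p x).toReal : EReal) := by exact_mod_cast h2
          _ = p x := EReal.coe_toReal hx (hpbot x)
    have h3 := hVI _ hmem
    rw [inner_add_left, hg] at h3
    rw [hseq, mul_zero, add_zero] at hposvc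
    linarith


/-- For `p : H → [0,+∞]` convex, lsc, positively 1-homogeneous with `p 0 = 0`,
`N_p = {ζ : ∀ x, ⟨ζ,x⟩ ≤ p x}` and `e ∈ H`: `x₀` minimizes `F x = (1/2)‖x‖² + p (x + e)`
iff `-x₀ ∈ N_p` and `‖e + x₀‖ = dist(e, N_p)`; in particular `F` has the unique minimizer
`-proj_{N_p} e`. -/
theorem stmt13 {H : Type*} [NormedAddCommGroup H] [InnerProductSpace ℝ H] [CompleteSpace H]
    (p : H → EReal)
    (hp0 : p 0 = 0)
    (hpnn : ∀ x, 0 ≤ p x)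
    (hconvex : ∀ x y : H, ∀ a b : ℝ, 0 ≤ a → 0 ≤ b → a + b = 1 →
      p (a • x + b • y) ≤ (a : EReal) * p x + (b : EReal) * p y)
    (hlsc : LowerSemicontinuous p)
    (hphom : ∀ t : ℝ, 0 < t → ∀ x, p (t • x) = (t : EReal) * p x)
    (N : Set H)
    (hN : N = {ζ : H | ∀ x : H, (⟪ζ, x⟫_ℝ : EReal) ≤ p x})
    (e : H)
    (F : H → EReal)
    (hF : ∀ x, F x = ((1/2 * ‖x‖^2 : ℝ) : EReal) + p (x + e))
    (ξ₀ : H)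
    (hξ₀mem : ξ₀ ∈ N)
    (hξ₀dist : ‖e - ξ₀‖ = Metric.infDist e N) :
    (∀ x₀ : H, (∀ x, F x₀ ≤ F x) ↔ (-x₀ ∈ N ∧ ‖e + x₀‖ = Metric.infDist e N)) ∧
    (∀ x, F (-ξ₀) ≤ F x) ∧
    (∀ y, (∀ x, F y ≤ F x) → y = -ξ₀) := by
  have hξ₀N : ∀ x : H, (⟪ξ₀, x⟫_ℝ : EReal) ≤ p x := by rw [hN] at hξ₀mem; exact hξ₀mem
  have hpbot : ∀ x : H, p x ≠ ⊥ := by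
    intro x hx
    have h := hpnn x
    rw [hx, le_bot_iff] at h
    simp at h
  have hNconv : Convex ℝ N := by
    rw [hN]
    intro ζ1 h1 ζ2 h2 a b ha hb hab
    intro x
    by_cases hx : p x = ⊤
    · rw [hx]; exact le_top
    · have e1 : ⟪ζ1, x⟫_ℝ ≤ (p x).toReal := by
        have := h1 x; rw [← EReal.coe_toReal hx (hpbot x)] at this; exact_mod_cast this
      have e2 : ⟪ζ2, x⟫_ℝ ≤ (p x).toReal := by
        have := h2 x; rw [← EReal.coe_toReal hx (hpbot x)] at this; exact_mod_cast this
      have e3 : ⟪a • ζ1 + b • ζ2, x⟫_ℝ ≤ (p x).toReal := by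
        rw [inner_add_left, real_inner_smul_left, real_inner_smul_left]
        have e4 : a * (p x).toReal + b * (p x).toReal = (p x).toReal := by
          rw [← add_mul, hab, one_mul]
        nlinarith [mul_le_mul_of_nonneg_left e1 ha, mul_le_mul_of_nonneg_left e2 hb]
      calc (⟪a • ζ1 + b • ζ2, x⟫_ℝ : EReal) ≤ ((p x).toReal : EReal) := by exact_mod_cast e3
        _ = p x := EReal.coe_toReal hx (hpbot x)
  have hmin : ∀ ζ ∈ N, ‖e - ξ₀‖ ≤ ‖e - ζ‖ := by
    intro ζ hζ
    rw [hξ₀dist]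
    have := Metric.infDist_le_dist_of_mem (x := e) hζ
    rwa [dist_eq_norm] at this
  have hVI : ∀ ζ ∈ N, ⟪ζ, e - ξ₀⟫_ℝ ≤ ⟪ξ₀, e - ξ₀⟫_ℝ := by
    intro ζ hζ
    have h := vi_aux hNconv hξ₀mem hmin hζ
    have h2 : ⟪e - ξ₀, ζ⟫_ℝ - ⟪e - ξ₀, ξ₀⟫_ℝ ≤ 0 := by rwa [← inner_sub_right]
    have h3 : ⟪ζ, e - ξ₀⟫_ℝ = ⟪e - ξ₀, ζ⟫_ℝ := real_inner_comm _ _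
    have h4 : ⟪ξ₀, e - ξ₀⟫_ℝ = ⟪e - ξ₀, ξ₀⟫_ℝ := real_inner_comm _ _
    rw [h3, h4]
    linarith
  set c₀ : ℝ := ⟪ξ₀, e - ξ₀⟫_ℝ with hc₀
  have hdual : p (e - ξ₀) = (c₀ : EReal) := by
    refine le_antisymm ?_ (hξ₀N _)
    exact sep_aux p hp0 hpnn hconvex hlsc hphom ξ₀ (e - ξ₀) hξ₀N
      (fun ζ hζ => hVI ζ (by rw [hN]; exact hζ))
  set C : ℝ := 1/2 * ‖ξ₀‖^2 + c₀ with hC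
  have hFval : F (-ξ₀) = (C : EReal) := by
    rw [hF]
    have h1 : -ξ₀ + e = e - ξ₀ := by abel
    rw [h1, hdual, norm_neg, ← EReal.coe_add]
  have he1 : c₀ = ⟪ξ₀, e⟫_ℝ - ‖ξ₀‖^2 := by
    rw [hc₀, inner_sub_right, real_inner_self_eq_norm_sq]
  have claim_min : ∀ x, F (-ξ₀) ≤ F x := by
    intro x
    rw [hFval, hF]
    have hp1 : (⟪ξ₀, x + e⟫_ℝ : EReal) ≤ p (x + e) := hξ₀N _
    have hreal : C ≤ 1/2 * ‖x‖^2 + ⟪ξ₀, x + e⟫_ℝ := by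
      have he2 : ⟪ξ₀, x + e⟫_ℝ = ⟪ξ₀, x⟫_ℝ + ⟪ξ₀, e⟫_ℝ := inner_add_right _ _ _
      nlinarith [norm_add_sq_real x ξ₀, real_inner_comm x ξ₀, sq_nonneg ‖x + ξ₀‖]
    calc (C : EReal) ≤ ((1/2 * ‖x‖^2 + ⟪ξ₀, x + e⟫_ℝ : ℝ) : EReal) := by exact_mod_cast hreal
      _ = ((1/2 * ‖x‖^2 : ℝ) : EReal) + ((⟪ξ₀, x + e⟫_ℝ : ℝ) : EReal) := EReal.coe_add _ _
      _ ≤ ((1/2 * ‖x‖^2 : ℝ) : EReal) + p (x + e) := add_le_add_right hp1 _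
  have claim_uniq : ∀ y, (∀ x, F y ≤ F x) → y = -ξ₀ := by
    intro y hy
    have h := hy (-ξ₀)
    rw [hFval, hF] at h
    have hptop : p (y + e) ≠ ⊤ := by
      intro htop
      rw [htop, EReal.coe_add_top] at h
      exact EReal.coe_ne_top C (top_le_iff.1 h)
    set r : ℝ := (p (y + e)).toReal with hr'
    have hpr : p (y + e) = (r : EReal) := (EReal.coe_toReal hptop (hpbot _)).symm
    rw [hpr, ← EReal.coe_add] at h
    have hreal : 1/2 * ‖y‖^2 + r ≤ C := by exact_mod_cast h
    have hrge : ⟪ξ₀, y + e⟫_ℝ ≤ r := by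
      have := hξ₀N (y + e); rw [hpr] at this; exact_mod_cast this
    have hnorm : ‖y + ξ₀‖^2 ≤ 0 := by
      have he2 : ⟪ξ₀, y + e⟫_ℝ = ⟪ξ₀, y⟫_ℝ + ⟪ξ₀, e⟫_ℝ := inner_add_right _ _ _
      nlinarith [norm_add_sq_real y ξ₀, real_inner_comm y ξ₀]
    have h0 : ‖y + ξ₀‖ ≤ 0 := by nlinarith [norm_nonneg (y + ξ₀)]
    have h1 : y + ξ₀ = 0 := norm_le_zero_iff.1 h0
    exact eq_neg_of_add_eq_zero_left h1
  refine ⟨?_, claim_min, claim_uniq⟩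
  intro x₀
  constructor
  · intro hx₀
    have hx : x₀ = -ξ₀ := claim_uniq _ hx₀
    subst hx
    refine ⟨by rwa [neg_neg], ?_⟩
    rw [← hξ₀dist, ← sub_eq_add_neg]
  · rintro ⟨hmem', hdist'⟩
    have hmin2 : ∀ ζ ∈ N, ‖e - -x₀‖ ≤ ‖e - ζ‖ := by
      intro ζ hζ
      rw [sub_neg_eq_add, hdist']
      have := Metric.infDist_le_dist_of_mem (x := e) hζ
      rwa [dist_eq_norm] at this
    have h1 := vi_aux hNconv hξ₀mem hmin hmem'
    have h2 := vi_aux hNconv hmem' hmin2 hξ₀mem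
    have hB : 0 ≤ ⟪e + x₀, -x₀ - ξ₀⟫_ℝ := by
      have heq : (-x₀ - ξ₀ : H) = -(ξ₀ - -x₀) := by abel
      rw [heq, inner_neg_right]
      have h2' : ⟪e - -x₀, ξ₀ - -x₀⟫_ℝ ≤ 0 := h2
      rw [sub_neg_eq_add] at h2'
      linarith
    have hC2 : ⟪-x₀ - ξ₀, -x₀ - ξ₀⟫_ℝ ≤ 0 := by
      have heq : ⟪-x₀ - ξ₀, -x₀ - ξ₀⟫_ℝ = ⟪e - ξ₀, -x₀ - ξ₀⟫_ℝ - ⟪e + x₀, -x₀ - ξ₀⟫_ℝ := by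
        rw [← inner_sub_left]
        congr 1
        abel
      rw [heq]
      linarith
    have hd : -x₀ - ξ₀ = 0 := inner_self_eq_zero.1 (le_antisymm hC2 real_inner_self_nonneg)
    have hx : x₀ = -ξ₀ := by
      have h3 : -x₀ = ξ₀ := sub_eq_zero.1 hd
      rw [← h3, neg_neg]
    rw [hx]
    exact claim_min
end
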